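/- For every permutation φ of {1,…,n}, the Euclidean diameter of the set D_{b,φ} equals √n · h. -/

import Mathlib

/-- The Freudenthal cell `D_{b,φ} = {x : 0 ≤ x_{φ(1)} - b_{φ(1)} ≤ ⋯ ≤ x_{φ(n)} - b_{φ(n)} ≤ h}`
of the cube with corner `b` and edge length `h`, associated to the permutation `φ`. -/
def freudenthalCell {n : ℕ} (h : ℝ) (b : EuclideanSpace ℝ (Fin n)) (φ : Equiv.Perm (Fin n)) :
    Set (EuclideanSpace ℝ (Fin n)) :=
  {x | (∀ i : Fin n, 0 ≤ x (φ i) - b (φ i) ∧ x (φ i) - b (φ i) ≤ h) ∧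
    ∀ i j : Fin n, i ≤ j → x (φ i) - b (φ i) ≤ x (φ j) - b (φ j)}

lemma freudenthalCell_dist_le {n : ℕ} {h : ℝ} (hh : 0 ≤ h)
    {b : EuclideanSpace ℝ (Fin n)} {φ : Equiv.Perm (Fin n)}
    {x y : EuclideanSpace ℝ (Fin n)} (hx : x ∈ freudenthalCell h b φ)
    (hy : y ∈ freudenthalCell h b φ) : dist x y ≤ Real.sqrt n * h := by
  have key : ∀ i : Fin n, dist (x i) (y i) ^ 2 ≤ h ^ 2 := by
    intro i
    obtain ⟨i', rfl⟩ : ∃ i', φ i' = i := ⟨φ.symm i, φ.apply_symm_apply i⟩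
    have h1 := hx.1 i'
    have h2 := hy.1 i'
    rw [Real.dist_eq]
    have : |x (φ i') - y (φ i')| ≤ h := by
      rw [abs_le]; constructor <;> nlinarith [h1.1, h1.2, h2.1, h2.2]
    nlinarith [abs_nonneg (x (φ i') - y (φ i'))]
  rw [EuclideanSpace.dist_eq]
  have : ∑ i, dist (x i) (y i) ^ 2 ≤ ∑ _i : Fin n, h ^ 2 :=
    Finset.sum_le_sum fun i _ => key i
  calc Real.sqrt (∑ i, dist (x i) (y i) ^ 2) ≤ Real.sqrt (∑ _i : Fin n, h ^ 2) :=
        Real.sqrt_le_sqrt this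
    _ = Real.sqrt n * h := by
        rw [Finset.sum_const, Finset.card_univ, Fintype.card_fin, nsmul_eq_mul]
        rw [Real.sqrt_mul (by positivity), Real.sqrt_sq hh]

/-- The Euclidean diameter of each Freudenthal cell is `√n · h`. -/
theorem freudenthalCell_diam {n : ℕ} (hn : 1 ≤ n) (h : ℝ) (hh : 0 < h)
    (b : EuclideanSpace ℝ (Fin n)) (φ : Equiv.Perm (Fin n)) :
    Metric.diam (freudenthalCell h b φ) = Real.sqrt n * h := by
  have hbdd : Bornology.IsBounded (freudenthalCell h b φ) := by
    rw [Metric.isBounded_iff]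
    exact ⟨Real.sqrt n * h, fun x hx y hy => freudenthalCell_dist_le hh.le hx hy⟩
  apply le_antisymm
  · exact Metric.diam_le_of_forall_dist_le (by positivity)
      fun x hx y hy => freudenthalCell_dist_le hh.le hx hy
  · set y : EuclideanSpace ℝ (Fin n) := WithLp.toLp 2 (fun i => b i + h) with hy
    have hb : b ∈ freudenthalCell h b φ := by
      constructor
      · intro i; simp [hh.le]
      · intro i j _; simp
    have hyc : y ∈ freudenthalCell h b φ := by
      constructor
      · intro i; simp [hy, hh.le]
      · intro i j _; simp [hy]
    have hd : dist b y = Real.sqrt n * h := by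
      rw [EuclideanSpace.dist_eq]
      have : ∀ i : Fin n, dist (b i) (y i) ^ 2 = h ^ 2 := by
        intro i
        rw [Real.dist_eq]
        simp [hy, abs_of_nonneg hh.le]
      rw [Finset.sum_congr rfl fun i _ => this i, Finset.sum_const, Finset.card_univ,
        Fintype.card_fin, nsmul_eq_mul, Real.sqrt_mul (by positivity), Real.sqrt_sq hh.le]
    rw [← hd]
    exact Metric.dist_le_diam_of_mem hbdd hb hyc
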